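/- Let L be the language of an S-adic shift with everywhere growing directive sequence (τ_n) over alphabets of cardinality ≤ d, with sets of images W_n = {τ_0⋯τ_{n-1}(a) : a ∈ A_n} and β_n^- = min_{v∈W_n}|v|, β_n^+ = max_{v∈W_n}|v|. Suppose that each letter i has uniform frequency f_i in L with error δ_n = max over letters i and words w ∈ W_n of ||w|_i/|w| − f_i|. Then for every word w ∈ L of length at least 4β_n^+/δ_n and every letter i, ||w|_i/|w| − f_i| ≤ 2δ_n. -/

import Mathlib

/-- The composition `τ_0 τ_1 ⋯ τ_{n-1} : A_n^* → A_0^*` of the first `n` substitutions of a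
directive sequence over the alphabets `A_n = Fin (d n)`. -/
def compSubV (d : ℕ → ℕ) (τ : ∀ n, Fin (d (n + 1)) → List (Fin (d n))) :
    ∀ n, List (Fin (d n)) → List (Fin (d 0))
  | 0 => id
  | n + 1 => fun w => compSubV d τ n (w.flatMap (τ n))

lemma compSubV_append (d : ℕ → ℕ) (τ : ∀ n, Fin (d (n + 1)) → List (Fin (d n))) :
    ∀ n (u v : List (Fin (d n))),
      compSubV d τ n (u ++ v) = compSubV d τ n u ++ compSubV d τ n v
  | 0, u, v => rfl
  | n + 1, u, v => by
    simp [compSubV, List.flatMap_append, compSubV_append d τ n]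

lemma compSubV_nil (d : ℕ → ℕ) (τ : ∀ n, Fin (d (n + 1)) → List (Fin (d n))) :
    ∀ n, compSubV d τ n [] = []
  | 0 => rfl
  | n + 1 => by simp [compSubV, compSubV_nil d τ n]

lemma compSubV_ne_nil (d : ℕ → ℕ) (τ : ∀ n, Fin (d (n + 1)) → List (Fin (d n)))
    (hne : ∀ n b, τ n b ≠ []) :
    ∀ n (w : List (Fin (d n))), w ≠ [] → compSubV d τ n w ≠ []
  | 0, w, hw => hw
  | n + 1, w, hw => by
    apply compSubV_ne_nil d τ hne n
    cases w with
    | nil => exact absurd rfl hw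
    | cons a t =>
      simp only [List.flatMap_cons, ne_eq, List.append_eq_nil_iff]
      intro ⟨h, _⟩; exact hne n a h

lemma compSubV_count_bound (d : ℕ → ℕ) (τ : ∀ n, Fin (d (n + 1)) → List (Fin (d n)))
    (hne : ∀ n b, τ n b ≠ []) (n : ℕ) (i : Fin (d 0)) (fi δ : ℝ) (hδ : 0 ≤ δ)
    (herr : ∀ a : Fin (d n),
      |((compSubV d τ n [a]).count i : ℝ) / ((compSubV d τ n [a]).length : ℝ) - fi| ≤ δ) :
    ∀ w' : List (Fin (d n)),
      |((compSubV d τ n w').count i : ℝ) - fi * ((compSubV d τ n w').length : ℝ)|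
        ≤ δ * ((compSubV d τ n w').length : ℝ) := by
  intro w'
  induction w' with
  | nil => simp [compSubV_nil]
  | cons a t ih =>
    have hsplit : compSubV d τ n (a :: t) = compSubV d τ n [a] ++ compSubV d τ n t := by
      rw [show (a :: t) = [a] ++ t from rfl, compSubV_append]
    have hL : (0 : ℝ) < ((compSubV d τ n [a]).length : ℝ) := by
      have := compSubV_ne_nil d τ hne n [a] (by simp)
      have := List.length_pos_iff.mpr this
      exact_mod_cast this
    set L : ℝ := ((compSubV d τ n [a]).length : ℝ)
    set c : ℝ := ((compSubV d τ n [a]).count i : ℝ)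
    have hone : |c - fi * L| ≤ δ * L := by
      have h := herr a
      have heq : c - fi * L = (c / L - fi) * L := by field_simp
      rw [heq, abs_mul, abs_of_pos hL]
      exact mul_le_mul_of_nonneg_right h (le_of_lt hL)
    rw [hsplit]
    push_cast [List.count_append, List.length_append]
    calc |c + ((compSubV d τ n t).count i : ℝ)
            - fi * (L + ((compSubV d τ n t).length : ℝ))|
        ≤ |c - fi * L| + |((compSubV d τ n t).count i : ℝ)
            - fi * ((compSubV d τ n t).length : ℝ)| := by
          have heq2 : c + ((compSubV d τ n t).count i : ℝ)
              - fi * (L + ((compSubV d τ n t).length : ℝ))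
              = (c - fi * L) + (((compSubV d τ n t).count i : ℝ)
                - fi * ((compSubV d τ n t).length : ℝ)) := by ring
          rw [heq2]; exact abs_add_le _ _
      _ ≤ δ * L + δ * ((compSubV d τ n t).length : ℝ) := add_le_add hone ih
      _ = δ * (L + ((compSubV d τ n t).length : ℝ)) := by ring

/-- Frequency transfer for `S`-adic languages: if every image `τ_0⋯τ_{n-1}(a)` has length at
most `β` and relative letter frequencies within `δ` of the frequency vector `f`, then every
word `w ∈ L` of length at least `4β/δ` has relative letter frequencies within `2δ` of `f`. -/
theorem sadic_frequency_error (d : ℕ → ℕ) (hd : ∀ k, 0 < d k)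
    (τ : ∀ n, Fin (d (n + 1)) → List (Fin (d n)))
    (hne : ∀ n b, τ n b ≠ [])
    (n : ℕ) (f : Fin (d 0) → ℝ)
    (hf0 : ∀ i, 0 ≤ f i) (hf1 : ∑ i, f i = 1)
    (β δ : ℝ) (hδ : 0 < δ)
    (hβ : ∀ a : Fin (d n), ((compSubV d τ n [a]).length : ℝ) ≤ β)
    (herr : ∀ (i : Fin (d 0)) (a : Fin (d n)),
      |((compSubV d τ n [a]).count i : ℝ) / ((compSubV d τ n [a]).length : ℝ) - f i| ≤ δ)
    (L : Set (List (Fin (d 0))))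
    (hDT : ∀ w ∈ L, ∃ (w' : List (Fin (d n))) (s p : List (Fin (d 0))),
      w = s ++ compSubV d τ n w' ++ p ∧
      (∃ a : Fin (d n), s <:+ compSubV d τ n [a]) ∧
      (∃ a : Fin (d n), p <+: compSubV d τ n [a])) :
    ∀ w ∈ L, ∀ i : Fin (d 0), 4 * β / δ ≤ (w.length : ℝ) →
      |((w.count i : ℝ) / (w.length : ℝ)) - f i| ≤ 2 * δ := by
  intro w hw i hlen
  obtain ⟨w', s, p, hdec, ⟨a1, hs⟩, ⟨a2, hp⟩⟩ := hDT w hw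
  have hfi1 : f i ≤ 1 := by
    calc f i ≤ ∑ j, f j := Finset.single_le_sum (fun j _ => hf0 j) (Finset.mem_univ i)
      _ = 1 := hf1
  -- β ≥ 1
  have hβ1 : (1 : ℝ) ≤ β := by
    have a0 : Fin (d n) := ⟨0, hd n⟩
    have h1 : compSubV d τ n [a0] ≠ [] := compSubV_ne_nil d τ hne n [a0] (by simp)
    have h2 : 1 ≤ (compSubV d τ n [a0]).length := List.length_pos_iff.mpr h1
    calc (1 : ℝ) ≤ ((compSubV d τ n [a0]).length : ℝ) := by exact_mod_cast h2
      _ ≤ β := hβ a0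
  have hwpos : (0 : ℝ) < (w.length : ℝ) :=
    lt_of_lt_of_le (by positivity) hlen
  -- bounds on s and p
  have hside : ∀ (v : List (Fin (d 0))) (a : Fin (d n)),
      v.length ≤ (compSubV d τ n [a]).length →
      |(v.count i : ℝ) - f i * (v.length : ℝ)| ≤ β := by
    intro v a hv
    have h1 : (v.length : ℝ) ≤ β := le_trans (by exact_mod_cast hv) (hβ a)
    have hc : (v.count i : ℝ) ≤ (v.length : ℝ) := by exact_mod_cast (List.count_le_length : v.count i ≤ v.length)
    have hc0 : (0 : ℝ) ≤ (v.count i : ℝ) := by positivity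
    have hl0 : (0 : ℝ) ≤ (v.length : ℝ) := by positivity
    rw [abs_le]
    constructor <;> nlinarith [hf0 i]
  have hcs := hside s a1 hs.length_le
  have hcp := hside p a2 hp.length_le
  have hcu := compSubV_count_bound d τ hne n i (f i) δ (le_of_lt hδ) (herr i) w'
  set u := compSubV d τ n w' with hu
  -- total count bound
  have hcountw : (w.count i : ℝ) = (s.count i : ℝ) + (u.count i : ℝ) + (p.count i : ℝ) := by
    rw [hdec]; push_cast [List.count_append]; ring
  have hlenw : (w.length : ℝ) = (s.length : ℝ) + (u.length : ℝ) + (p.length : ℝ) := by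
    rw [hdec]; push_cast [List.length_append]; ring
  have hulen : (u.length : ℝ) ≤ (w.length : ℝ) := by
    rw [hlenw]; have : (0:ℝ) ≤ (s.length : ℝ) := by positivity
    have : (0:ℝ) ≤ (p.length : ℝ) := by positivity
    nlinarith [show (0:ℝ) ≤ (s.length : ℝ) by positivity]
  have h4β : 4 * β ≤ δ * (w.length : ℝ) := by
    rw [div_le_iff₀ hδ] at hlen; linarith [hlen]
  have hkey : |(w.count i : ℝ) - f i * (w.length : ℝ)| ≤ 2 * δ * (w.length : ℝ) := by
    have htri : |(w.count i : ℝ) - f i * (w.length : ℝ)|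
        ≤ |(s.count i : ℝ) - f i * (s.length : ℝ)|
          + |(u.count i : ℝ) - f i * (u.length : ℝ)|
          + |(p.count i : ℝ) - f i * (p.length : ℝ)| := by
      rw [hcountw, hlenw]
      calc |(s.count i : ℝ) + (u.count i : ℝ) + (p.count i : ℝ)
              - f i * ((s.length : ℝ) + (u.length : ℝ) + (p.length : ℝ))|
          = |((s.count i : ℝ) - f i * (s.length : ℝ))
              + (((u.count i : ℝ) - f i * (u.length : ℝ))
              + ((p.count i : ℝ) - f i * (p.length : ℝ)))| := by ring_nf
        _ ≤ _ := by
            refine (abs_add_le _ _).trans ?_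
            have := abs_add_le ((u.count i : ℝ) - f i * (u.length : ℝ))
              ((p.count i : ℝ) - f i * (p.length : ℝ))
            linarith
    have hδu : δ * (u.length : ℝ) ≤ δ * (w.length : ℝ) :=
      mul_le_mul_of_nonneg_left hulen (le_of_lt hδ)
    calc |(w.count i : ℝ) - f i * (w.length : ℝ)|
        ≤ β + δ * (u.length : ℝ) + β := by linarith [htri, hcs, hcp, hcu]
      _ ≤ 2 * δ * (w.length : ℝ) := by nlinarith
  have heq : (w.count i : ℝ) / (w.length : ℝ) - f i
      = ((w.count i : ℝ) - f i * (w.length : ℝ)) / (w.length : ℝ) := by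
    field_simp
  rw [heq, abs_div, abs_of_pos hwpos, div_le_iff₀ hwpos]
  calc |(w.count i : ℝ) - f i * (w.length : ℝ)| ≤ 2 * δ * (w.length : ℝ) := hkey
    _ = 2 * δ * (w.length : ℝ) := rfl
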